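/- Let S be a multiset with elements in [n]\{1}, and let S' = {s-1 : s in S} union {1}. Then the set of flattened S-insertion parking functions over permutations of [n] is in bijection with the set of flattened S'-insertion parking functions over permutations of [n-1]. Explicitly, the map sending a = a_1 a_2 ... a_{n+m} (where m = |S|) to b with b_1 = a_1 and b_i = a_i - 1 for 1 < i <= n+m is such a bijection. -/

import Mathlib

namespace FlatPF

/-- Decomposition of a word into maximal weakly increasing runs. -/
def runs : List ℕ → List (List ℕ)
  | [] => []
  | a :: l =>
    match runs l with
    | [] => [[a]]
    | [] :: rs => [a] :: rs
    | (b :: t) :: rs => if a ≤ b then (a :: b :: t) :: rs else [a] :: (b :: t) :: rs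

/-- The number of maximal weakly increasing runs of a word. -/
def numRuns (w : List ℕ) : ℕ := (runs w).length

/-- A word is flattened if the leading values of its runs are weakly increasing. -/
def IsFlattened (w : List ℕ) : Prop :=
  List.Chain' (· ≤ ·) ((runs w).map (fun r => r.headD 0))

/-- A word is a parking function: entries in `[m]` and the weakly increasing
rearrangement `(a'_1, …, a'_m)` satisfies `a'_i ≤ i`. -/
def IsPF (w : List ℕ) : Prop :=
  (∀ x ∈ w, 1 ≤ x ∧ x ≤ w.length) ∧
  ∀ i < w.length, (w.mergeSort (· ≤ ·)).getD i 0 ≤ i + 1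

/-- `w` is obtained by inserting the elements of the multiset `S` into some
permutation of `[n]`, keeping the letters of the permutation in relative order. -/
def IsInsertion (S : Multiset ℕ) (n : ℕ) (w : List ℕ) : Prop :=
  (↑w : Multiset ℕ) = ↑(List.range' 1 n) + S ∧
  ∃ p : List ℕ, p.Perm (List.range' 1 n) ∧ p.Sublist w

/-- Flattened `S`-insertion parking functions of order `n`. -/
def flatIns (S : Multiset ℕ) (n : ℕ) : Set (List ℕ) :=
  {w | IsInsertion S n w ∧ IsFlattened w}

/-- Flattened `S`-insertion parking functions of order `n` with exactly `k` runs. -/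
def flatInsK (S : Multiset ℕ) (n k : ℕ) : Set (List ℕ) :=
  {w | IsInsertion S n w ∧ IsFlattened w ∧ numRuns w = k}

/-- `f(S; n, k)`, the number of flattened `S`-insertion parking functions of order `n`
with exactly `k` runs.  In particular `fS 0 n k` is the number of flattened
permutations of `[n]` with `k` runs. -/
noncomputable def fS (S : Multiset ℕ) (n k : ℕ) : ℕ := (flatInsK S n k).ncard

end FlatPF

namespace FlatPF
theorem runs_cons (a : ℕ) (l : List ℕ) :
    runs (a :: l) = match runs l with
      | [] => [[a]]
      | [] :: rs => [a] :: rs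
      | (b :: t) :: rs => if a ≤ b then (a :: b :: t) :: rs else [a] :: (b :: t) :: rs := rfl

theorem runs_cons_nil (a : ℕ) {l : List ℕ} (h : runs l = []) : runs (a :: l) = [[a]] := by
  rw [runs_cons, h]

theorem runs_cons_cons (a b : ℕ) {l : List ℕ} {t : List ℕ} {rs : List (List ℕ)}
    (h : runs l = (b :: t) :: rs) :
    runs (a :: l) = if a ≤ b then (a :: b :: t) :: rs else [a] :: (b :: t) :: rs := by
  rw [runs_cons, h]

theorem runs_join (l : List ℕ) : (runs l).flatten = l := by
  induction l with
  | nil => rfl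
  | cons a l ih =>
    rw [runs_cons]
    rcases h : runs l with _ | ⟨(_ | ⟨b, t⟩), rs⟩ <;> rw [h] at ih <;> simp_all
    split <;> simp_all

theorem runs_ne_nil {l : List ℕ} : ∀ r ∈ runs l, r ≠ [] := by
  induction l with
  | nil => simp [runs]
  | cons a l ih =>
    rw [runs_cons]
    rcases h : runs l with _ | ⟨(_ | ⟨b, t⟩), rs⟩ <;> rw [h] at ih <;> try simp_all
    split <;> simp_all

theorem runs_sorted {l : List ℕ} : ∀ r ∈ runs l, List.Chain' (· ≤ ·) r := by
  induction l with
  | nil => simp [runs]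
  | cons a l ih =>
    rcases h : runs l with _ | ⟨(_ | ⟨b, t⟩), rs⟩
    · rw [runs_cons_nil a h]; simp; exact List.isChain_singleton a
    · exact absurd rfl (runs_ne_nil _ (h ▸ List.mem_cons_self))
    · rw [h] at ih
      rw [runs_cons_cons a b h]
      have h1 : List.Chain' (· ≤ ·) (b :: t) := ih _ (List.mem_cons_self)
      have h2 : ∀ r ∈ rs, List.Chain' (· ≤ ·) r := fun r hr => ih r (List.mem_cons_of_mem _ hr)
      split
      · rename_i hab
        intro r hr
        rcases List.mem_cons.mp hr with rfl | hr
        · exact List.isChain_cons_cons.mpr ⟨hab, h1⟩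
        · exact h2 r hr
      · intro r hr
        rcases List.mem_cons.mp hr with rfl | hr
        · exact List.isChain_singleton a
        · rcases List.mem_cons.mp hr with rfl | hr
          · exact h1
          · exact h2 r hr

theorem mem_of_mem_runs {l : List ℕ} {r : List ℕ} (hr : r ∈ runs l) {x : ℕ} (hx : x ∈ r) :
    x ∈ l := by
  have := runs_join l
  exact this ▸ List.mem_flatten.mpr ⟨r, hr, hx⟩

theorem runs_map (f : ℕ → ℕ) : ∀ (l : List ℕ), (∀ x ∈ l, ∀ y ∈ l, (f x ≤ f y ↔ x ≤ y)) →
    runs (l.map f) = (runs l).map (List.map f)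
  | [], _ => rfl
  | a :: l, hf => by
    have ih := runs_map f l (fun x hx y hy =>
      hf x (List.mem_cons_of_mem _ hx) y (List.mem_cons_of_mem _ hy))
    rcases h : runs l with _ | ⟨(_ | ⟨b, t⟩), rs⟩
    · rw [h] at ih
      have hl : l = [] := by
        have hj := runs_join l
        rw [h] at hj
        simpa using hj.symm
      subst hl
      rfl
    · exact absurd rfl (runs_ne_nil _ (h ▸ List.mem_cons_self))
    · rw [h] at ih
      have hb : b ∈ l := mem_of_mem_runs (h ▸ List.mem_cons_self) (List.mem_cons_self)
      have hiff := hf a (List.mem_cons_self) b (List.mem_cons_of_mem _ hb)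
      have hmf : runs (List.map f l) = (f b :: List.map f t) :: List.map (List.map f) rs := by
        rw [ih]; simp
      rw [List.map_cons, runs_cons_cons (f a) (f b) hmf, runs_cons_cons a b h]
      by_cases hab : a ≤ b
      · rw [if_pos hab, if_pos (hiff.mpr hab)]; simp
      · rw [if_neg hab, if_neg (fun hc => hab (hiff.mp hc))]; simp

theorem chain_headD_le {r : List ℕ} (hr : List.Chain' (· ≤ ·) r) {x : ℕ} (hx : x ∈ r) :
    r.headD 0 ≤ x := by
  rcases r with _ | ⟨h, t⟩
  · cases hx
  · rcases List.mem_cons.mp hx with rfl | hx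
    · exact le_refl _
    · exact (List.pairwise_cons.mp (List.isChain_iff_pairwise.mp hr)).1 x hx

theorem flattened_head_le {w : List ℕ} (hw : IsFlattened w) {x : ℕ} (hx : x ∈ w) :
    w.headD 0 ≤ x := by
  have hj := runs_join w
  rcases h : runs w with _ | ⟨(_ | ⟨h₀, t₀⟩), rs⟩
  · rw [h] at hj; simp at hj; subst hj; cases hx
  · exact absurd rfl (runs_ne_nil _ (h ▸ List.mem_cons_self))
  · rw [h] at hj
    have hw0 : w.headD 0 = h₀ := by rw [← hj]; rfl
    rw [hw0]
    rw [← hj] at hx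
    rcases (by simpa using hx : x = h₀ ∨ x ∈ t₀ ∨ ∃ r ∈ rs, x ∈ r) with rfl | hx | ⟨r, hr, hxr⟩
    · exact le_refl _
    · exact chain_headD_le (runs_sorted _ (h ▸ List.mem_cons_self)) (List.mem_cons_of_mem _ hx)
    · have hrm : r ∈ runs w := h ▸ List.mem_cons_of_mem _ hr
      unfold IsFlattened at hw
      rw [h] at hw
      have hp := List.isChain_iff_pairwise.mp hw
      simp only [List.map_cons, List.headD_cons] at hp
      have hle : h₀ ≤ r.headD 0 :=
        (List.pairwise_cons.mp hp).1 _ (List.mem_map.mpr ⟨r, hr, rfl⟩)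
      exact hle.trans (chain_headD_le (runs_sorted _ hrm) hxr)

theorem isFlattened_cons_map (f : ℕ → ℕ) (t : List ℕ)
    (h1 : ∀ x ∈ t, 1 ≤ x)
    (hf : ∀ x ∈ t, ∀ y ∈ t, (f x ≤ f y ↔ x ≤ y))
    (hf1 : ∀ x ∈ t, 1 ≤ f x) :
    IsFlattened (1 :: t.map f) ↔ IsFlattened (1 :: t) := by
  unfold IsFlattened
  have hm := runs_map f t hf
  rcases h : runs t with _ | ⟨(_ | ⟨b, t'⟩), rs⟩
  · have ht : t = [] := by have hj := runs_join t; rw [h] at hj; simpa using hj.symm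
    subst ht; simp [runs]
  · exact absurd rfl (runs_ne_nil _ (h ▸ List.mem_cons_self))
  · rw [h] at hm
    have hb : b ∈ t := mem_of_mem_runs (h ▸ List.mem_cons_self) (List.mem_cons_self)
    have hmf : runs (t.map f) = (f b :: t'.map f) :: rs.map (List.map f) := by rw [hm]; simp
    rw [runs_cons_cons 1 (f b) hmf, runs_cons_cons 1 b h,
        if_pos (hf1 b hb), if_pos (h1 b hb)]
    simp only [List.map_cons, List.headD_cons]
    have hheads : ∀ r ∈ rs, (List.map f r).headD 0 = f (r.headD 0) ∧ r.headD 0 ∈ t := by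
      intro r hr
      have hrne := runs_ne_nil r (h ▸ List.mem_cons_of_mem _ hr)
      rcases r with _ | ⟨x, r'⟩
      · exact absurd rfl hrne
      · exact ⟨rfl, mem_of_mem_runs (h ▸ List.mem_cons_of_mem _ hr) (List.mem_cons_self)⟩
    have key : (rs.map (List.map f)).map (fun r => r.headD 0)
        = (rs.map (fun r => r.headD 0)).map f := by
      rw [List.map_map, List.map_map]
      exact List.map_congr_left (fun r hr => (hheads r hr).1)
    rw [key]
    have hhs : ∀ y ∈ rs.map (fun r => r.headD 0), y ∈ t := by
      intro y hy; rcases List.mem_map.mp hy with ⟨r, hr, rfl⟩; exact (hheads r hr).2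
    unfold List.Chain'
    rw [List.isChain_iff_pairwise, List.isChain_iff_pairwise, List.pairwise_cons,
        List.pairwise_cons]
    have hiff : List.Pairwise (fun a b => f a ≤ f b) (rs.map (fun r => r.headD 0))
        ↔ List.Pairwise (· ≤ ·) (rs.map (fun r => r.headD 0)) :=
      List.Pairwise.iff_of_mem (fun ha hb => hf _ (hhs _ ha) _ (hhs _ hb))
    constructor
    · rintro ⟨h1', h2'⟩
      refine ⟨fun y hy => h1 y (hhs y hy), ?_⟩
      rw [List.pairwise_map] at h2'
      exact hiff.mp h2'
    · rintro ⟨h1', h2'⟩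
      refine ⟨?_, ?_⟩
      · intro y hy
        rcases List.mem_map.mp hy with ⟨z, hz, rfl⟩
        exact hf1 z (hhs z hz)
      · rw [List.pairwise_map]
        exact hiff.mpr h2'

end FlatPF

theorem exists_sublist_perm_cons {x : ℕ} {q l : List ℕ} (h : q.Sublist l)
    (hc : q.count x < l.count x) : ∃ q' : List ℕ, q'.Perm (x :: q) ∧ q'.Sublist l := by
  induction h with
  | slnil => simp at hc
  | @cons q l a h ih =>
    by_cases h' : q.count x < l.count x
    · obtain ⟨q', hp, hs⟩ := ih h'
      exact ⟨q', hp, hs.trans (List.sublist_cons_self a l)⟩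
    · have hle := h.count_le x
      have hxa : a = x := by
        rw [List.count_cons] at hc
        by_contra hne
        simp [hne] at hc
        omega
      subst hxa
      exact ⟨a :: q, List.Perm.refl _, h.cons₂ a⟩
  | @cons_cons q l a h ih =>
    have hc' : q.count x < l.count x := by
      rw [List.count_cons, List.count_cons] at hc; omega
    obtain ⟨q', hp, hs⟩ := ih hc'
    exact ⟨a :: q', (hp.cons a).trans (List.Perm.swap x a q), hs.cons₂ a⟩

theorem exists_perm_sublist_tail {p u : List ℕ} (h : p.Sublist (1 :: u))
    (hc : p.count 1 ≤ u.count 1) : ∃ p' : List ℕ, p'.Perm p ∧ p'.Sublist u := by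
  rcases List.sublist_cons_iff.mp h with h | ⟨r, rfl, hr⟩
  · exact ⟨p, List.Perm.refl _, h⟩
  · have hlt : r.count 1 < u.count 1 := by
      rw [List.count_cons] at hc; simp at hc; omega
    obtain ⟨q', hp, hs⟩ := exists_sublist_perm_cons hr hlt
    exact ⟨q', hp, hs⟩

theorem range'_eq (n : ℕ) (hn : 1 ≤ n) : List.range' 1 n = 1 :: List.range' 2 (n - 1) := by
  obtain ⟨m, rfl⟩ : ∃ m, n = m + 1 := ⟨n - 1, by omega⟩
  rw [List.range'_succ]
  norm_num

theorem range'_map_succ (m : ℕ) : (List.range' 1 m).map (· + 1) = List.range' 2 m := by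
  rw [← List.map_add_range' (a := 1) 1 m 1]
  exact List.map_congr_left (fun x _ => Nat.add_comm x 1)

theorem range'_map_pred (m : ℕ) : (List.range' 2 m).map (· - 1) = List.range' 1 m := by
  rw [← range'_map_succ m, List.map_map]
  exact (List.map_congr_left (fun x _ => by simp)).trans (List.map_id _)

theorem multiset_shift (X Y : Multiset ℕ) : 1 ::ₘ (X + Y) = X + (Y + {1}) := by
  rw [← add_assoc, add_comm (X + Y) {1}, Multiset.singleton_add]

open FlatPF

theorem fwd (n : ℕ) (hn : 1 ≤ n) (S : Multiset ℕ) (hS : ∀ s ∈ S, 2 ≤ s ∧ s ≤ n)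
    {a : List ℕ} (ha : a ∈ flatIns S n) :
    ∃ t : List ℕ, a = 1 :: t ∧ (∀ x ∈ t, 2 ≤ x) ∧
      (1 :: t.map (· - 1)) ∈ flatIns (S.map (· - 1) + {1}) (n - 1) := by
  obtain ⟨⟨hms, p, hp, hps⟩, hfl⟩ := ha
  have h1a : (1 : ℕ) ∈ a := by
    rw [← Multiset.mem_coe, hms]
    exact Multiset.mem_add.mpr (Or.inl (by rw [Multiset.mem_coe, List.mem_range'_1]; omega))
  have hpos : ∀ x ∈ a, 1 ≤ x := by
    intro x hx
    have hx' : x ∈ (↑a : Multiset ℕ) := Multiset.mem_coe.mpr hx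
    rw [hms] at hx'
    rcases Multiset.mem_add.mp hx' with h | h
    · exact (List.mem_range'_1.mp (Multiset.mem_coe.mp h)).1
    · exact le_trans one_le_two (hS x h).1
  obtain ⟨t, rfl⟩ : ∃ t, a = 1 :: t := by
    rcases a with _ | ⟨x, t⟩
    · cases h1a
    · have hx1 : x = 1 := le_antisymm (flattened_head_le hfl h1a) (hpos x (List.mem_cons_self))
      exact ⟨t, by rw [hx1]⟩
  have hmt : (↑t : Multiset ℕ) = ↑(List.range' 2 (n - 1)) + S := by
    have h := hms
    rw [range'_eq n hn, ← Multiset.cons_coe, ← Multiset.cons_coe, Multiset.cons_add] at h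
    exact (Multiset.cons_inj_right 1).mp h
  have ht2 : ∀ x ∈ t, 2 ≤ x := by
    intro x hx
    have hx' : x ∈ (↑t : Multiset ℕ) := Multiset.mem_coe.mpr hx
    rw [hmt] at hx'
    rcases Multiset.mem_add.mp hx' with h | h
    · exact (List.mem_range'_1.mp (Multiset.mem_coe.mp h)).1
    · exact (hS x h).1
  refine ⟨t, rfl, ht2, ⟨?_, ?_⟩, ?_⟩
  · -- multiset condition
    show (↑(1 :: t.map (· - 1)) : Multiset ℕ) = (↑(List.range' 1 (n - 1)) : Multiset ℕ) + (S.map (· - 1) + {1})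
    rw [← Multiset.cons_coe, ← Multiset.map_coe, hmt, Multiset.map_add, Multiset.map_coe,
        range'_map_pred, multiset_shift]
  · -- sublist condition
    have hc1p : List.count 1 p = 1 := by
      rw [hp.count_eq]
      exact List.count_eq_one_of_mem List.nodup_range'
        (by rw [List.mem_range'_1]; omega)
    have hc1t : List.count 1 t = 0 := by
      rw [List.count_eq_zero]
      intro hmem
      exact absurd (ht2 1 hmem) (by norm_num)
    rcases List.sublist_cons_iff.mp hps with hsub | ⟨q, rfl, hq⟩
    · have := hsub.count_le 1
      omega
    · have hqperm : q.Perm (List.range' 2 (n - 1)) := by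
        have h := hp
        rw [range'_eq n hn] at h
        exact h.cons_inv
      refine ⟨q.map (· - 1), ?_, ?_⟩
      · have h := hqperm.map (· - 1)
        rwa [range'_map_pred] at h
      · exact (hq.map (· - 1)).trans (List.sublist_cons_self _ _)
  · exact (isFlattened_cons_map (· - 1) t (fun x hx => le_trans one_le_two (ht2 x hx))
      (fun x hx y hy => by
        have h1 := ht2 x hx; have h2 := ht2 y hy
        show x - 1 ≤ y - 1 ↔ x ≤ y
        omega)
      (fun x hx => by have h1 := ht2 x hx; show 1 ≤ x - 1; omega)).mpr hfl

theorem bwd (n : ℕ) (hn : 1 ≤ n) (S : Multiset ℕ) (hS : ∀ s ∈ S, 2 ≤ s ∧ s ≤ n)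
    {b : List ℕ} (hb : b ∈ flatIns (S.map (· - 1) + {1}) (n - 1)) :
    ∃ u : List ℕ, b = 1 :: u ∧ (1 :: u.map (· + 1)) ∈ flatIns S n ∧
      (u.map (· + 1)).map (· - 1) = u := by
  obtain ⟨⟨hms, p, hp, hps⟩, hfl⟩ := hb
  have h1b : (1 : ℕ) ∈ b := by
    rw [← Multiset.mem_coe, hms]
    exact Multiset.mem_add.mpr (Or.inr (Multiset.mem_add.mpr (Or.inr (by simp))))
  have hpos : ∀ x ∈ b, 1 ≤ x := by
    intro x hx
    have hx' : x ∈ (↑b : Multiset ℕ) := Multiset.mem_coe.mpr hx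
    rw [hms] at hx'
    rcases Multiset.mem_add.mp hx' with h | h
    · exact (List.mem_range'_1.mp (Multiset.mem_coe.mp h)).1
    · rcases Multiset.mem_add.mp h with h | h
      · rcases Multiset.mem_map.mp h with ⟨s, hs, rfl⟩
        have := (hS s hs).1
        omega
      · exact (Multiset.mem_singleton.mp h).ge
  obtain ⟨u, rfl⟩ : ∃ u, b = 1 :: u := by
    rcases b with _ | ⟨x, u⟩
    · cases h1b
    · have hx1 : x = 1 := le_antisymm (flattened_head_le hfl h1b) (hpos x (List.mem_cons_self))
      exact ⟨u, by rw [hx1]⟩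
  have hmu : (↑u : Multiset ℕ) = (↑(List.range' 1 (n - 1)) : Multiset ℕ) + S.map (· - 1) := by
    have h := hms
    rw [← Multiset.cons_coe, ← multiset_shift] at h
    exact (Multiset.cons_inj_right 1).mp h
  have hupos : ∀ x ∈ u, 1 ≤ x := fun x hx => hpos x (List.mem_cons_of_mem _ hx)
  have hround : (u.map (· + 1)).map (· - 1) = u := by
    rw [List.map_map]
    exact (List.map_congr_left (fun x _ => by simp)).trans (List.map_id _)
  refine ⟨u, rfl, ⟨⟨?_, ?_⟩, ?_⟩, hround⟩
  · -- multiset condition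
    show (↑(1 :: u.map (· + 1)) : Multiset ℕ) = ↑(List.range' 1 n) + S
    rw [← Multiset.cons_coe, ← Multiset.map_coe, hmu, Multiset.map_add, Multiset.map_coe,
        range'_map_succ, Multiset.map_map]
    have hSmap : S.map ((· + 1) ∘ (· - 1)) = S := by
      rw [show ((· + 1) ∘ (· - 1) : ℕ → ℕ) = fun s => s - 1 + 1 from rfl]
      calc S.map (fun s => s - 1 + 1) = S.map id :=
            Multiset.map_congr rfl (fun s hs => by
              have h1 := (hS s hs).1
              show s - 1 + 1 = id s
              simp only [id]
              omega)
        _ = S := Multiset.map_id S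
    rw [hSmap, range'_eq n hn, ← Multiset.cons_coe, Multiset.cons_add]
  · -- sublist condition
    have hcle : p.count 1 ≤ u.count 1 := by
      have h1 : p.count 1 = (List.range' 1 (n - 1)).count 1 := hp.count_eq 1
      have h2 : (List.range' 1 (n - 1)).count 1 ≤ u.count 1 := by
        have hc := congrArg (Multiset.count 1) hmu
        rw [Multiset.coe_count, Multiset.count_add, Multiset.coe_count] at hc
        omega
      omega
    obtain ⟨p', hp', hps'⟩ := exists_perm_sublist_tail hps hcle
    refine ⟨1 :: p'.map (· + 1), ?_, ?_⟩
    · have h : (p'.map (· + 1)).Perm (List.range' 2 (n - 1)) := by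
        have h := (hp'.trans hp).map (· + 1)
        rwa [range'_map_succ] at h
      rw [range'_eq n hn]
      exact h.cons 1
    · exact (hps'.map _).cons₂ 1
  · exact (isFlattened_cons_map (· + 1) u hupos
      (fun x hx y hy => by show x + 1 ≤ y + 1 ↔ x ≤ y; omega)
      (fun x hx => by show 1 ≤ x + 1; omega)).mpr hfl

theorem stmt5_aux (n : ℕ) (hn : 1 ≤ n) (S : Multiset ℕ) (hS : ∀ s ∈ S, 2 ≤ s ∧ s ≤ n) :
    Set.BijOn
      (fun a : List ℕ => match a with
        | [] => []
        | x :: xs => x :: xs.map (· - 1))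
      (flatIns S n) (flatIns (S.map (· - 1) + {1}) (n - 1)) := by
  refine ⟨?_, ?_, ?_⟩
  · intro a ha
    obtain ⟨t, rfl, -, hmem⟩ := fwd n hn S hS ha
    exact hmem
  · intro a ha a' ha' heq
    obtain ⟨t, rfl, ht2, -⟩ := fwd n hn S hS ha
    obtain ⟨t', rfl, ht2', -⟩ := fwd n hn S hS ha'
    have heq' : t.map (· - 1) = t'.map (· - 1) := by
      have h : (1 : ℕ) :: t.map (· - 1) = 1 :: t'.map (· - 1) := heq
      exact (List.cons_inj_right 1).mp h
    have key : ∀ (l : List ℕ), (∀ x ∈ l, 2 ≤ x) → (l.map (· - 1)).map (· + 1) = l := by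
      intro l hl
      rw [List.map_map]
      exact (List.map_congr_left (fun x hx => by
        have := hl x hx
        show x - 1 + 1 = id x
        simp only [id]
        omega)).trans (List.map_id _)
    have : t = t' := by
      rw [← key t ht2, ← key t' ht2', heq']
    rw [this]
  · intro b hb
    obtain ⟨u, rfl, hmem, hround⟩ := bwd n hn S hS hb
    refine ⟨1 :: u.map (· + 1), hmem, ?_⟩
    show (1 : ℕ) :: (u.map (· + 1)).map (· - 1) = 1 :: u
    rw [hround]



open FlatPF in
/-- For `S` with elements in `[n] \ {1}` and `S' = {s - 1 : s ∈ S} ∪ {1}`, the map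
sending `a₁a₂⋯` to `b` with `b₁ = a₁` and `bᵢ = aᵢ - 1` for `i > 1` is a bijection from
the flattened `S`-insertion parking functions of order `n` onto the flattened
`S'`-insertion parking functions of order `n - 1`. -/
theorem stmt5 (n : ℕ) (hn : 1 ≤ n) (S : Multiset ℕ) (hS : ∀ s ∈ S, 2 ≤ s ∧ s ≤ n) :
    Set.BijOn
      (fun a : List ℕ => match a with
        | [] => []
        | x :: xs => x :: xs.map (· - 1))
      (flatIns S n) (flatIns (S.map (· - 1) + {1}) (n - 1)) := stmt5_aux n hn S hS
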